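/- All successful pressing paths of a black-and-white graph G have the same length. Equivalently, if P and Q are both successful pressing paths of G, then |P| = |Q|. -/

import Mathlib

structure BW (V : Type) where
  adj : V → V → Bool
  black : V → Bool
  symm : ∀ u w, adj u w = adj w u
  irrefl : ∀ v, adj v v = false

variable {V : Type} [DecidableEq V]

/-- Pressing a vertex `v`: neighbors toggle color, pairs of neighbors toggle
adjacency, and `v` becomes white and isolated. -/
def press (G : BW V) (v : V) : BW V where
  adj u w :=
    if u = v ∨ w = v ∨ u = w then false
    else xor (G.adj u w) (G.adj u v && G.adj w v)
  black u := if u = v then false else xor (G.black u) (G.adj u v)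
  symm := by
    intro u w
    by_cases h1 : u = v <;> by_cases h2 : w = v <;> by_cases h3 : u = w <;>
      simp_all [G.symm u w, Bool.xor_comm, Bool.and_comm] <;> tauto
  irrefl := by intro u; simp

/-- The graph obtained after pressing the vertices of a list in order. -/
def pressPath (G : BW V) : List V → BW V
  | [] => G
  | v :: P => pressPath (press G v) P

/-- A pressing path is valid if every vertex is black when it is pressed. -/
def ValidPath (G : BW V) : List V → Prop
  | [] => True
  | v :: P => G.black v = true ∧ ValidPath (press G v) P

/-- The all-white, edgeless graph. -/
def AllWhiteEmpty (G : BW V) : Prop :=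
  (∀ v, G.black v = false) ∧ ∀ u w, G.adj u w = false

/-- A successful pressing path: valid and leading to the all-white empty graph. -/
def Successful (G : BW V) (P : List V) : Prop :=
  ValidPath G P ∧ AllWhiteEmpty (pressPath G P)

/-- The underlying simple graph of a black-and-white graph. -/
def BW.toSimple (G : BW V) : SimpleGraph V where
  Adj u w := G.adj u w = true
  symm := ⟨fun u w h => (G.symm w u).trans h⟩
  loopless := ⟨fun v h => by simp [G.irrefl] at h⟩

/-- `l` enumerates the vertices as a path: `G` is linear with vertex order `l`. -/
def IsPathList (G : BW V) (l : List V) : Prop :=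
  l.Nodup ∧ (∀ v, v ∈ l) ∧
    ∀ u w, G.adj u w = true ↔ ∃ i,
      (l[i]? = some u ∧ l[i+1]? = some w) ∨ (l[i]? = some w ∧ l[i+1]? = some u)

/-- A linear (path) black-and-white graph. -/
def IsLinear (G : BW V) : Prop := ∃ l, IsPathList G l

/-- Adjacency step in the metagraph of successful pressing paths:
their longest common subsequence misses at most 2 presses. -/
def Step (G : BW V) (P Q : List V) : Prop :=
  Successful G P ∧ Successful G Q ∧
    ∃ R : List V, R.Sublist P ∧ R.Sublist Q ∧ P.length ≤ R.length + 2

/-- Transposition of two consecutive presses which are non-adjacent at that moment. -/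
def SwapStep (G : BW V) (P Q : List V) : Prop :=
  ∃ A u w B, P = A ++ u :: w :: B ∧ Q = A ++ w :: u :: B ∧
    (pressPath G A).adj u w = false

/-- The induced black-and-white graph on a subset of the vertices. -/
def BW.restrict (G : BW V) (p : V → Prop) [DecidablePred p] : BW {u // p u} where
  adj u w := G.adj u.1 w.1
  black u := G.black u.1
  symm := fun u w => G.symm u.1 w.1
  irrefl := fun u => G.irrefl u.1

/-- The all-black path graph on `n` vertices. -/
def pathAllBlack (n : ℕ) : BW (Fin n) where
  adj i j := decide (i.1 + 1 = j.1 ∨ j.1 + 1 = i.1)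
  black _ := true
  symm := by intro u w; simp [or_comm]
  irrefl := by intro v; simp

section Aux

/-- The column of the GF(2) matrix of `G` at vertex `u`. -/
def Mcol (G : BW V) (u : V) : V → ZMod 2 := fun w =>
  if w = u then (if G.black u then 1 else 0) else (if G.adj w u then 1 else 0)

/-- Column space of the matrix of `G`. -/
def colSpace (G : BW V) : Submodule (ZMod 2) (V → ZMod 2) :=
  Submodule.span (ZMod 2) (Set.range (Mcol G))

/-- The elimination map `x ↦ x + x v • c`. -/
def Ev (c : V → ZMod 2) (v : V) : (V → ZMod 2) →ₗ[ZMod 2] (V → ZMod 2) where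
  toFun x := x + x v • c
  map_add' x y := by simp [add_smul]; module
  map_smul' a x := by simp [smul_smul]

lemma Mcol_press (G : BW V) (v : V) (hb : G.black v = true) (u : V) :
    Mcol (press G v) u = Ev (Mcol G v) v (Mcol G u) := by
  funext w
  have e1 : G.adj v u = G.adj u v := G.symm v u
  simp only [Ev, LinearMap.coe_mk, AddHom.coe_mk, Pi.add_apply, Pi.smul_apply, smul_eq_mul]
  by_cases huv : u = v
  · subst huv
    by_cases hwv : w = u
    · subst hwv; simp [Mcol, press, hb]; decide
    · simp only [Mcol, press, if_neg hwv, hb, if_pos rfl]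
      rcases h : G.adj w u <;> simp [hwv, h] <;> decide
  · by_cases hwv : w = v
    · subst hwv
      simp only [Mcol, press, if_neg (Ne.symm huv), if_pos rfl, hb]
      rcases h : G.adj w u <;> simp [huv, Ne.symm huv, h, e1] <;> decide
    · by_cases hwu : w = u
      · subst hwu
        simp only [Mcol, press, if_pos rfl, if_neg hwv, if_neg (Ne.symm huv), e1]
        rcases hB : G.black w <;> rcases hA : G.adj w v <;>
          simp [huv, hwv, hB, hA] <;> decide
      · simp only [Mcol, press, if_neg hwu, if_neg hwv, if_neg (Ne.symm huv), e1]
        have hrw : (if w = v ∨ u = v ∨ w = u then false else G.adj w u ^^ G.adj w v && G.adj u v)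
            = (G.adj w u ^^ G.adj w v && G.adj u v) := by simp [huv, hwv, hwu]
        simp only [hrw]
        rcases h1 : G.adj w u <;> rcases h2 : G.adj w v <;> rcases h3 : G.adj u v <;>
          simp [h1, h2, h3] <;> decide

lemma colSpace_press (G : BW V) (v : V) (hb : G.black v = true) :
    colSpace (press G v) = (colSpace G).map (Ev (Mcol G v) v) := by
  have h : Mcol (press G v) = (Ev (Mcol G v) v) ∘ Mcol G :=
    funext (Mcol_press G v hb)
  rw [colSpace, colSpace, h, Set.range_comp, ← Submodule.map_span]

lemma neg_eq_self' (y : V → ZMod 2) : -y = y := by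
  rw [← neg_one_smul (ZMod 2) y, show (-1 : ZMod 2) = 1 from by decide, one_smul]

lemma add_self' (y : V → ZMod 2) : y + y = 0 := by
  rw [← two_smul (ZMod 2) y, show (2 : ZMod 2) = 0 from by decide, zero_smul]

lemma ker_Ev (c : V → ZMod 2) (v : V) (hc : c v = 1) :
    LinearMap.ker (Ev c v) = Submodule.span (ZMod 2) {c} := by
  ext x
  simp only [LinearMap.mem_ker, Submodule.mem_span_singleton, Ev, LinearMap.coe_mk,
    AddHom.coe_mk]
  constructor
  · intro h
    refine ⟨x v, ?_⟩
    have hx := eq_neg_of_add_eq_zero_left h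
    conv_rhs => rw [hx]
    rw [neg_eq_self']
  · rintro ⟨a, rfl⟩
    have hv : (a • c) v = a := by simp [hc]
    rw [hv, add_self']

lemma Mcol_mem (G : BW V) (u : V) : Mcol G u ∈ colSpace G :=
  Submodule.subset_span ⟨u, rfl⟩

lemma Mcol_ne_zero (G : BW V) (v : V) (hb : G.black v = true) : Mcol G v ≠ 0 := by
  intro h
  have := congrFun h v
  simp [Mcol, hb] at this

set_option synthInstance.maxHeartbeats 1000000 in
set_option maxHeartbeats 1000000 in
/-- rank drops by exactly one under the elimination map. -/
lemma rank_map_Ev (G : BW V) (v : V) (hb : G.black v = true) :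
    Module.rank (ZMod 2) ((colSpace G).map (Ev (Mcol G v) v)) + 1
      = Module.rank (ZMod 2) (colSpace G) := by
  set c := Mcol G v with hc
  set e := Ev c v with he
  set W := colSpace G with hW
  have hcv : c v = 1 := by simp [hc, Mcol, hb]
  have hker : LinearMap.ker e = Submodule.span (ZMod 2) {c} := ker_Ev c v hcv
  have hcW : c ∈ W := Mcol_mem G v
  have hc0 : c ≠ 0 := Mcol_ne_zero G v hb
  -- consider f = e ∘ W.subtype
  set f := e.comp W.subtype with hf
  have hrange : LinearMap.range f = W.map e := by
    rw [hf, LinearMap.range_comp, Submodule.range_subtype]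
  have hkerf : LinearMap.ker f = (Submodule.span (ZMod 2) {c}).comap W.subtype := by
    rw [hf, LinearMap.ker_comp, hker]
  have hle : Submodule.span (ZMod 2) {c} ≤ W := by
    rw [Submodule.span_singleton_le_iff_mem]; exact hcW
  have hrk_ker : Module.rank (ZMod 2) (LinearMap.ker f) = 1 := by
    rw [hkerf]
    rw [(Submodule.comapSubtypeEquivOfLe hle).rank_eq]
    rw [rank_span_set ((linearIndepOn_singleton_iff (ZMod 2) (v := id) (i := c)).2 hc0)]
    simp
  have := LinearMap.rank_range_add_rank_ker f
  rw [hrange, hrk_ker] at this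
  exact this

lemma colSpace_allWhite (G : BW V) (h : AllWhiteEmpty G) : colSpace G = ⊥ := by
  have : ∀ u, Mcol G u = 0 := by
    intro u; funext w
    simp [Mcol, h.1 u, h.2 w u]
  rw [colSpace]
  refine le_antisymm (Submodule.span_le.2 ?_) bot_le
  rintro x ⟨u, rfl⟩
  simp [this u]

lemma rank_eq_length : ∀ (P : List V) (G : BW V), Successful G P →
    Module.rank (ZMod 2) (colSpace G) = (P.length : Cardinal) := by
  intro P
  induction P with
  | nil =>
    intro G hS
    rw [colSpace_allWhite G hS.2]
    simp [rank_bot]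
  | cons v P ih =>
    intro G hS
    obtain ⟨⟨hb, hvalid⟩, hend⟩ := hS
    have hS' : Successful (press G v) P := ⟨hvalid, hend⟩
    have h1 := ih (press G v) hS'
    rw [colSpace_press G v hb] at h1
    have h2 := rank_map_Ev G v hb
    rw [h1] at h2
    rw [← h2]
    norm_cast

end Aux

/-- All successful pressing paths of a black-and-white graph have the same length. -/
theorem stmt8 {V : Type} [DecidableEq V] (G : BW V) (P Q : List V)
    (hP : Successful G P) (hQ : Successful G Q) :
    P.length = Q.length := by
  have h1 := rank_eq_length P G hP
  have h2 := rank_eq_length Q G hQ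
  rw [h1] at h2
  exact_mod_cast h2
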